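/- Let χ : E^r → {−1,0,1} and m : E^r → ℚ_{>0} be functions with χ alternating, m symmetric (invariant under permutations of arguments), and suppose the pointwise product f = χ·m satisfies the Grassmann–Plücker relations. If χ' : E^r → {−1,0,1} is another alternating function such that χ'·m also satisfies the Grassmann–Plücker relations, χ and χ' have the same support, and χ' agrees with χ on some tuple B₀ with χ(B₀) ≠ 0 and on all tuples differing from B₀ in one coordinate, then χ = χ'. -/

import Mathlib

open Finset

/-- An alternating function: applying a permutation multiplies the value by its sign. -/
def IsAlt {E : Type*} {r : ℕ} (f : (Fin r → E) → ℚ) : Prop :=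
  ∀ (σ : Equiv.Perm (Fin r)) (x : Fin r → E),
    f (x ∘ σ) = ((Equiv.Perm.sign σ : ℤ) : ℚ) * f x

/-- The Grassmann–Plücker relation for a function of rank `r + 1`. -/
def IsGP {E : Type*} {r : ℕ} (f : (Fin (r + 1) → E) → ℚ) : Prop :=
  ∀ (x : Fin r → E) (y : Fin (r + 2) → E),
    ∑ i : Fin (r + 2), (-1 : ℚ) ^ (i : ℕ) * f (Fin.cons (y i) x) * f (y ∘ i.succAbove) = 0

/-- An alternating function vanishes on tuples with a repeated entry. -/
theorem IsAlt.eq_zero_of_repeat {E : Type*} {r : ℕ} {f : (Fin r → E) → ℚ}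
    (hf : IsAlt f) {x : Fin r → E} {i j : Fin r} (hij : i ≠ j) (hx : x i = x j) :
    f x = 0 := by
  have hcomp : x ∘ (Equiv.swap i j) = x := by
    funext k
    simp only [Function.comp_apply, Equiv.swap_apply_def]
    split_ifs with h1 h2
    · rw [h1, hx]
    · rw [h2, hx]
    · rfl
  have h := hf (Equiv.swap i j) x
  rw [hcomp, Equiv.Perm.sign_swap hij] at h
  push_cast at h
  linarith

/-- Key uniqueness lemma for Grassmann–Plücker functions: two alternating GP functions with
the same nonzero value at `B₀` agreeing on all neighbours of `B₀` coincide. -/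
theorem GP_unique {E : Type*} {r : ℕ} (f g : (Fin (r + 1) → E) → ℚ)
    (hfalt : IsAlt f) (hgalt : IsAlt g)
    (hGPf : IsGP f) (hGPg : IsGP g)
    (B₀ : Fin (r + 1) → E) (hfB₀ : f B₀ ≠ 0)
    (hB₀eq : g B₀ = f B₀)
    (h1 : ∀ (i : Fin (r + 1)) (e : E),
      g (Function.update B₀ i e) = f (Function.update B₀ i e)) :
    f = g := by
  classical
  have hgB₀ : g B₀ ≠ 0 := by rw [hB₀eq]; exact hfB₀
  have hB₀inj : Function.Injective B₀ := by
    intro a b hab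
    by_contra hne
    exact hfB₀ (hfalt.eq_zero_of_repeat hne hab)
  -- the zero case : all entries of X lie in the range of B₀
  have zerocase : ∀ X : Fin (r + 1) → E, (∀ j, ∃ i, B₀ i = X j) → f X = g X := by
    intro X hX
    by_cases hinj : Function.Injective X
    · choose ι hι using hX
      have hιinj : Function.Injective ι := by
        intro a b hab
        apply hinj
        rw [← hι a, ← hι b, hab]
      have hιbij : Function.Bijective ι := Finite.injective_iff_bijective.mp hιinj
      let σ : Equiv.Perm (Fin (r + 1)) := Equiv.ofBijective ι hιbij
      have hXB : X = B₀ ∘ σ := funext fun j => (hι j).symm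
      rw [hXB, hfalt σ B₀, hgalt σ B₀, hB₀eq]
    · simp only [Function.Injective] at hinj
      push_neg at hinj
      obtain ⟨a, b, hab, hne⟩ := hinj
      rw [hfalt.eq_zero_of_repeat hne hab, hgalt.eq_zero_of_repeat hne hab]
  -- the pivot case : X 0 is outside the range of B₀
  have pivot : ∀ (N : ℕ),
      (∀ Y : Fin (r + 1) → E,
        (univ.filter fun l => Y l ∉ Set.range B₀).card ≤ N → f Y = g Y) →
      ∀ X : Fin (r + 1) → E, X 0 ∉ Set.range B₀ →
      (univ.filter fun l => X l ∉ Set.range B₀).card ≤ N + 1 → f X = g X := by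
    intro N ih X hX0 hcard
    have h0mem : (0 : Fin (r + 1)) ∈ univ.filter fun l => X l ∉ Set.range B₀ := by
      simp only [mem_filter, mem_univ, true_and]
      exact hX0
    have hGf := hGPf (Fin.tail X) (Fin.snoc B₀ (X 0))
    have hGg := hGPg (Fin.tail X) (Fin.snoc B₀ (X 0))
    rw [Fin.sum_univ_castSucc] at hGf hGg
    -- the terms indexed by `castSucc j` agree for `f` and `g`
    have hterm : ∀ j : Fin (r + 1),
        (-1 : ℚ) ^ ((j.castSucc : Fin (r + 2)) : ℕ) *
            f (Fin.cons ((Fin.snoc B₀ (X 0) : Fin (r + 2) → E) j.castSucc) (Fin.tail X)) *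
            f (Fin.snoc B₀ (X 0) ∘ (j.castSucc).succAbove)
          = (-1 : ℚ) ^ ((j.castSucc : Fin (r + 2)) : ℕ) *
            g (Fin.cons ((Fin.snoc B₀ (X 0) : Fin (r + 2) → E) j.castSucc) (Fin.tail X)) *
            g (Fin.snoc B₀ (X 0) ∘ (j.castSucc).succAbove) := by
      intro j
      have e1 : (Fin.snoc B₀ (X 0) : Fin (r + 2) → E) j.castSucc = B₀ j := by simp
      -- first factor : induction hypothesis
      have hA : f (Fin.cons (B₀ j) (Fin.tail X)) = g (Fin.cons (B₀ j) (Fin.tail X)) := by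
        apply ih
        have hsub : (univ.filter fun l => Fin.cons (B₀ j) (Fin.tail X) l ∉ Set.range B₀)
            ⊆ (univ.filter fun l => X l ∉ Set.range B₀).erase 0 := by
          intro l hl
          simp only [mem_filter, mem_univ, true_and] at hl
          have hl0 : l ≠ 0 := by
            rintro rfl
            exact hl ⟨j, by simp⟩
          rw [mem_erase]
          refine ⟨hl0, ?_⟩
          simp only [mem_filter, mem_univ, true_and]
          have hlsucc : l = Fin.succ (l.pred hl0) := (Fin.succ_pred l hl0).symm
          rw [hlsucc] at hl
          rw [Fin.cons_succ] at hl
          rw [hlsucc]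
          exact hl
        have := Finset.card_le_card hsub
        rw [Finset.card_erase_of_mem h0mem] at this
        omega
      -- second factor : neighbour hypothesis, up to a permutation
      have hV : f (Fin.snoc B₀ (X 0) ∘ (j.castSucc).succAbove)
          = g (Fin.snoc B₀ (X 0) ∘ (j.castSucc).succAbove) := by
        set U : Fin (r + 1) → E := Function.update B₀ j (X 0) with hU
        set τ : Equiv.Perm (Fin (r + 1)) :=
          (finSuccEquiv' (Fin.last r)).trans (finSuccEquiv' j).symm with hτ
        have hVU : Fin.snoc B₀ (X 0) ∘ (j.castSucc).succAbove = U ∘ τ := by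
          funext k
          induction k using Fin.lastCases with
          | last =>
            have h2 : τ (Fin.last r) = j := by
              simp [hτ, finSuccEquiv'_at, finSuccEquiv'_symm_none]
            have h3 : (j.castSucc).succAbove (Fin.last r) = Fin.last (r + 1) := by
              rw [Fin.succAbove_of_le_castSucc]
              · exact Fin.succ_last r
              · rw [Fin.castSucc_le_castSucc_iff]
                exact Fin.le_last j
            simp only [Function.comp_apply]
            rw [h3, h2]
            simp [hU]
          | cast k =>
            have h2 : τ k.castSucc = j.succAbove k := by
              simp only [hτ, Equiv.trans_apply]
              rw [show (finSuccEquiv' (Fin.last r)) k.castSucc = some k from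
                finSuccEquiv'_last_apply_castSucc k]
              exact finSuccEquiv'_symm_some j k
            have h3 : (j.castSucc).succAbove k.castSucc = (j.succAbove k).castSucc :=
              Fin.castSucc_succAbove_castSucc
            simp only [Function.comp_apply]
            rw [h3, h2, Fin.snoc_castSucc, hU,
              Function.update_of_ne (Fin.succAbove_ne j k)]
        have hfU : f U = g U := (h1 j (X 0)).symm
        rw [hVU, hfalt τ U, hgalt τ U, hfU]
      rw [e1, hA, hV]
    have hsums :
        (∑ j : Fin (r + 1), (-1 : ℚ) ^ ((j.castSucc : Fin (r + 2)) : ℕ) *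
            f (Fin.cons ((Fin.snoc B₀ (X 0) : Fin (r + 2) → E) j.castSucc) (Fin.tail X)) *
            f (Fin.snoc B₀ (X 0) ∘ (j.castSucc).succAbove))
        = ∑ j : Fin (r + 1), (-1 : ℚ) ^ ((j.castSucc : Fin (r + 2)) : ℕ) *
            g (Fin.cons ((Fin.snoc B₀ (X 0) : Fin (r + 2) → E) j.castSucc) (Fin.tail X)) *
            g (Fin.snoc B₀ (X 0) ∘ (j.castSucc).succAbove) :=
      Finset.sum_congr rfl fun j _ => hterm j
    -- simplify the last terms
    have hlastf : (Fin.snoc B₀ (X 0) : Fin (r + 2) → E) (Fin.last (r + 1)) = X 0 := by simp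
    have hconsX : Fin.cons (X 0) (Fin.tail X) = X := Fin.cons_self_tail X
    have hlastcomp : Fin.snoc B₀ (X 0) ∘ (Fin.last (r + 1)).succAbove = B₀ := by
      rw [Fin.succAbove_last]
      exact Fin.snoc_comp_castSucc
    rw [hlastf, hconsX, hlastcomp] at hGf hGg
    have hfg : (-1 : ℚ) ^ ((Fin.last (r + 1) : Fin (r + 2)) : ℕ) * f X * f B₀
        = (-1 : ℚ) ^ ((Fin.last (r + 1) : Fin (r + 2)) : ℕ) * g X * g B₀ := by
      linarith [hGf, hGg, hsums]
    have hpow : ((-1 : ℚ) ^ ((Fin.last (r + 1) : Fin (r + 2)) : ℕ)) ≠ 0 := by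
      apply pow_ne_zero; norm_num
    have hXX : f X * f B₀ = g X * g B₀ := by
      have := mul_left_cancel₀ hpow (by linarith [hfg] :
        (-1 : ℚ) ^ ((Fin.last (r + 1) : Fin (r + 2)) : ℕ) * (f X * f B₀)
          = (-1 : ℚ) ^ ((Fin.last (r + 1) : Fin (r + 2)) : ℕ) * (g X * g B₀))
      exact this
    rw [hB₀eq] at hXX
    exact mul_right_cancel₀ hfB₀ hXX
  -- main induction on the number of entries outside the range of B₀
  have key : ∀ (N : ℕ) (X : Fin (r + 1) → E),
      (univ.filter fun l => X l ∉ Set.range B₀).card ≤ N → f X = g X := by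
    intro N
    induction N with
    | zero =>
      intro X hX
      apply zerocase
      intro j
      by_contra hj
      have : j ∈ univ.filter fun l => X l ∉ Set.range B₀ := by
        simp only [mem_filter, mem_univ, true_and, Set.mem_range]
        exact hj
      have := Finset.card_pos.mpr ⟨j, this⟩
      omega
    | succ N ih =>
      intro X hX
      by_cases h0 : ∀ j, X j ∈ Set.range B₀
      · apply zerocase
        intro j
        obtain ⟨i, hi⟩ := h0 j
        exact ⟨i, hi⟩
      · push_neg at h0
        obtain ⟨j0, hj0⟩ := h0
        set τ0 : Equiv.Perm (Fin (r + 1)) := Equiv.swap 0 j0 with hτ0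
        have hXτ0 : (X ∘ τ0) 0 ∉ Set.range B₀ := by
          simpa [hτ0, Equiv.swap_apply_left] using hj0
        have hcardeq : (univ.filter fun l => (X ∘ τ0) l ∉ Set.range B₀).card
            = (univ.filter fun l => X l ∉ Set.range B₀).card := by
          apply Finset.card_bij' (fun l _ => τ0 l) (fun l _ => τ0 l)
          · intro l hl
            simp only [mem_filter, mem_univ, true_and] at hl ⊢
            exact hl
          · intro l hl
            simp only [mem_filter, mem_univ, true_and, Function.comp_apply] at hl ⊢
            rw [hτ0, Equiv.swap_apply_self]
            exact hl
          · intro l _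
            rw [hτ0, Equiv.swap_apply_self]
          · intro l _
            rw [hτ0, Equiv.swap_apply_self]
        have hXeq : f (X ∘ τ0) = g (X ∘ τ0) := by
          apply pivot N ih (X ∘ τ0) hXτ0
          rw [hcardeq]
          exact hX
        have hs : ((Equiv.Perm.sign τ0 : ℤ) : ℚ) ≠ 0 := by
          have : (Equiv.Perm.sign τ0 : ℤ) ≠ 0 := Units.ne_zero _
          exact_mod_cast this
        have h1' := hfalt τ0 X
        have h2' := hgalt τ0 X
        rw [hXeq] at h1'
        rw [h2'] at h1'
        exact mul_left_cancel₀ hs h1'.symm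
  funext X
  exact key _ X le_rfl

/-- Uniqueness of the orientation: two chirotopes with the same multiplicity, the same
support, compatible with (GP), agreeing on `B₀` and on all its neighbours, coincide. -/
theorem orientation_unique {E : Type*} {r : ℕ} (χ χ' m : (Fin (r + 1) → E) → ℚ)
    (hχr : ∀ x, χ x = -1 ∨ χ x = 0 ∨ χ x = 1)
    (hχ'r : ∀ x, χ' x = -1 ∨ χ' x = 0 ∨ χ' x = 1)
    (hm : ∀ x, 0 < m x)
    (hmsym : ∀ (σ : Equiv.Perm (Fin (r + 1))) (x : Fin (r + 1) → E), m (x ∘ σ) = m x)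
    (hχalt : IsAlt χ) (hχ'alt : IsAlt χ')
    (hGP : IsGP (fun x => χ x * m x)) (hGP' : IsGP (fun x => χ' x * m x))
    (hsupp : ∀ x, χ x = 0 ↔ χ' x = 0)
    (B₀ : Fin (r + 1) → E) (hB₀ : χ B₀ ≠ 0) (hB₀eq : χ' B₀ = χ B₀)
    (h1 : ∀ (i : Fin (r + 1)) (e : E), e ≠ B₀ i →
      χ' (Function.update B₀ i e) = χ (Function.update B₀ i e)) :
    χ = χ' := by
  have hfalt : IsAlt (fun x => χ x * m x) := by
    intro σ x
    simp only
    rw [hχalt σ x, hmsym σ x]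
    ring
  have hgalt : IsAlt (fun x => χ' x * m x) := by
    intro σ x
    simp only
    rw [hχ'alt σ x, hmsym σ x]
    ring
  have hfB₀ : χ B₀ * m B₀ ≠ 0 := mul_ne_zero hB₀ (hm B₀).ne'
  have hB₀eq' : χ' B₀ * m B₀ = χ B₀ * m B₀ := by rw [hB₀eq]
  have h1' : ∀ (i : Fin (r + 1)) (e : E),
      χ' (Function.update B₀ i e) * m (Function.update B₀ i e)
        = χ (Function.update B₀ i e) * m (Function.update B₀ i e) := by
    intro i e
    by_cases he : e = B₀ i
    · subst he
      rw [Function.update_eq_self]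
      rw [hB₀eq]
    · rw [h1 i e he]
  have hfg := GP_unique (fun x => χ x * m x) (fun x => χ' x * m x)
    hfalt hgalt hGP hGP' B₀ hfB₀ hB₀eq' h1'
  funext x
  have := congrFun hfg x
  exact mul_right_cancel₀ (hm x).ne' this
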